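/- Substituting γ* = arccos((R² + r² − μ²(R − s)²)/(2rR)) into φ(γ) = α(γ) − δ(γ) yields φ(γ*) = arcsin((μ²(R − s)² + r² − R²)/(2μ r (R − s))). -/

import Mathlib

/-- Substituting γ* = arccos((R² + r² − μ²(R−s)²)/(2rR)) into φ(γ) = α(γ) − δ(γ)
yields φ(γ*) = arcsin((μ²(R − s)² + r² − R²)/(2μ r (R − s))). -/

private lemma aux_sqrt_le {a b : ℝ} (ha : 0 < a) (h : b ^ 2 ≤ a ^ 2) : b ≤ a := by
  nlinarith

private lemma aux_key (m r R s C D2 : ℝ) (hu1 : 0 ≤ m + r - R) (h2 : 0 ≤ m + r + R - 2 * s)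
    (hs : 0 ≤ s) (hC : C ≤ 1) (hu : 0 ≤ m + r)
    (hD2 : D2 = r ^ 2 - 2 * r * s * C + s ^ 2) :
    0 ≤ 2 * m * (r - s * C) + (m ^ 2 - (R - s) ^ 2 + D2) := by
  nlinarith [mul_nonneg hu1 h2, mul_nonneg (mul_nonneg hs (by linarith : (0:ℝ) ≤ 1 - C)) hu]

set_option maxHeartbeats 1000000 in
theorem stmt_6 (μ R s r : ℝ) (hμ : 0 < μ) (hμ1 : μ ≤ 1) (hR : 0 < R)
    (hs : 0 ≤ s) (hsR : s < R) (hr : 0 < r)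
    (d : ℝ → ℝ) (hd : d = fun γ => Real.sqrt (r ^ 2 - 2 * r * s * Real.cos γ + s ^ 2))
    (α : ℝ → ℝ)
    (hα : α = fun γ =>
      Real.arcsin (((μ ^ 2 - 1) * (R - s) ^ 2 + d γ ^ 2) / (2 * μ * d γ * (R - s))))
    (δ : ℝ → ℝ)
    (hδ : δ = fun γ =>
      Complex.arg ((r - s * Real.cos γ : ℝ) + (s * Real.sin γ : ℝ) * Complex.I))
    (γstar : ℝ)
    (hγ : γstar = Real.arccos ((R ^ 2 + r ^ 2 - μ ^ 2 * (R - s) ^ 2) / (2 * r * R)))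
    (hcos : (R ^ 2 + r ^ 2 - μ ^ 2 * (R - s) ^ 2) / (2 * r * R) ∈ Set.Icc (-1 : ℝ) 1)
    (hsin : ((μ ^ 2 - 1) * (R - s) ^ 2 + d γstar ^ 2) / (2 * μ * d γstar * (R - s)) ∈
      Set.Icc (-1 : ℝ) 1)
    (hdpos : 0 < d γstar) :
    α γstar - δ γstar =
      Real.arcsin ((μ ^ 2 * (R - s) ^ 2 + r ^ 2 - R ^ 2) / (2 * μ * r * (R - s))) := by
  have ht : 0 < R - s := by linarith
  have hμt : 0 < μ * (R - s) := mul_pos hμ ht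
  have hγ0 : 0 ≤ γstar := hγ ▸ Real.arccos_nonneg _
  have hγπ : γstar ≤ Real.pi := hγ ▸ Real.arccos_le_pi _
  have hS0 : 0 ≤ Real.sin γstar := Real.sin_nonneg_of_nonneg_of_le_pi hγ0 hγπ
  have hc : Real.cos γstar = (R ^ 2 + r ^ 2 - μ ^ 2 * (R - s) ^ 2) / (2 * r * R) := by
    rw [hγ]; exact Real.cos_arccos hcos.1 hcos.2
  have hS2 : Real.sin γstar ^ 2 = 1 - Real.cos γstar ^ 2 := by
    have := Real.sin_sq_add_cos_sq γstar; linarith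
  have hd2 : d γstar ^ 2 = r ^ 2 - 2 * r * s * Real.cos γstar + s ^ 2 := by
    rw [hd]
    exact Real.sq_sqrt (by
      nlinarith [Real.cos_le_one γstar, Real.neg_one_le_cos γstar,
        sq_nonneg (r - s), sq_nonneg (r + s), mul_nonneg (mul_nonneg hr.le hs) hr.le])
  set D := d γstar with hDdef
  set S := Real.sin γstar with hSdef
  set C := Real.cos γstar with hCdef
  -- facts about δ
  have hnormsq : Complex.normSq ((r - s * C : ℝ) + (s * S : ℝ) * Complex.I) = D ^ 2 := by
    rw [Complex.normSq_add_mul_I]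
    linear_combination s ^ 2 * Real.sin_sq_add_cos_sq γstar - hd2
  have habs : ‖((r - s * C : ℝ) + (s * S : ℝ) * Complex.I : ℂ)‖ = D := by
    rw [Complex.norm_def, hnormsq]
    exact Real.sqrt_sq hdpos.le
  have hzne : ((r - s * C : ℝ) + (s * S : ℝ) * Complex.I : ℂ) ≠ 0 := by
    intro h
    rw [h, norm_zero] at habs
    exact absurd habs.symm (ne_of_gt hdpos)
  have hδval : δ γstar = Complex.arg ((r - s * C : ℝ) + (s * S : ℝ) * Complex.I) := by
    rw [hδ]
  have hcosδ : Real.cos (δ γstar) = (r - s * C) / D := by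
    rw [hδval, Complex.cos_arg hzne, habs]; simp
  have hsinδ : Real.sin (δ γstar) = (s * S) / D := by
    rw [hδval, Complex.sin_arg, habs]; simp
  have hδ0 : 0 ≤ δ γstar := by
    rw [hδval]
    exact Complex.arg_nonneg_iff.mpr (by simp [mul_nonneg hs hS0])
  have hδπ : δ γstar ≤ Real.pi := hδval ▸ Complex.arg_le_pi _
  -- facts about α
  set A := ((μ ^ 2 - 1) * (R - s) ^ 2 + D ^ 2) / (2 * μ * D * (R - s)) with hA
  have hαval : α γstar = Real.arcsin A := by rw [hα]
  have hsinα : Real.sin (α γstar) = A := by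
    rw [hαval]; exact Real.sin_arcsin hsin.1 hsin.2
  have hα1 : -(Real.pi / 2) ≤ α γstar := hαval ▸ Real.neg_pi_div_two_le_arcsin A
  have hα2 : α γstar ≤ Real.pi / 2 := hαval ▸ Real.arcsin_le_pi_div_two A
  have key1 : 4 * μ ^ 2 * D ^ 2 * (R - s) ^ 2 - ((μ ^ 2 - 1) * (R - s) ^ 2 + D ^ 2) ^ 2
      = 4 * (R - s) ^ 2 * r ^ 2 * S ^ 2 := by
    rw [hd2, hS2, hc]
    field_simp
    ring
  have h1A : 1 - A ^ 2 = (4 * μ ^ 2 * D ^ 2 * (R - s) ^ 2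
      - ((μ ^ 2 - 1) * (R - s) ^ 2 + D ^ 2) ^ 2) / (4 * μ ^ 2 * D ^ 2 * (R - s) ^ 2) := by
    rw [hA]
    field_simp
    ring
  have h2A : 1 - A ^ 2 = (r * S / (μ * D)) ^ 2 := by
    rw [h1A, key1]
    field_simp
  have hcosα : Real.cos (α γstar) = r * S / (μ * D) := by
    rw [hαval, Real.cos_arcsin, h2A]
    exact Real.sqrt_sq (div_nonneg (mul_nonneg hr.le hS0) (mul_pos hμ hdpos).le)
  -- the sine of the difference
  have hI2 : r * (((μ ^ 2 - 1) * (R - s) ^ 2 + D ^ 2) * (r - s * C)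
      - 2 * (R - s) * r * s * S ^ 2) = D ^ 2 * (μ ^ 2 * (R - s) ^ 2 + r ^ 2 - R ^ 2) := by
    rw [hd2, hS2, hc]
    field_simp
    ring
  have hsin_main : Real.sin (α γstar - δ γstar)
      = (μ ^ 2 * (R - s) ^ 2 + r ^ 2 - R ^ 2) / (2 * μ * r * (R - s)) := by
    rw [Real.sin_sub, hsinα, hcosα, hsinδ, hcosδ, hA]
    have lhs_eq : ((μ ^ 2 - 1) * (R - s) ^ 2 + D ^ 2) / (2 * μ * D * (R - s)) * ((r - s * C) / D)
        - r * S / (μ * D) * (s * S / D)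
        = (((μ ^ 2 - 1) * (R - s) ^ 2 + D ^ 2) * (r - s * C)
            - 2 * (R - s) * r * s * S ^ 2) / (2 * μ * (R - s) * D ^ 2) := by
      field_simp
    rw [lhs_eq, div_eq_div_iff (by positivity) (by positivity)]
    linear_combination (2 * μ * (R - s)) * hI2
  -- the range of the difference
  have hC1 : C ≤ 1 := Real.cos_le_one γstar
  have hfr : (R - r) ^ 2 ≤ (μ * (R - s)) ^ 2 := by
    have h1 : R ^ 2 + r ^ 2 - μ ^ 2 * (R - s) ^ 2 ≤ 2 * r * R :=
      (div_le_one (by positivity)).mp hcos.2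
    linarith [h1]
  have hRr : R - r ≤ μ * (R - s) := aux_sqrt_le hμt hfr
  have hu1 : 0 ≤ μ * (R - s) + r - R := by linarith
  have hkey : 0 ≤ 2 * μ * (R - s) * (r - s * C) + ((μ ^ 2 - 1) * (R - s) ^ 2 + D ^ 2) := by
    have := aux_key (μ * (R - s)) r R s C (D ^ 2) hu1 (by linarith) hs hC1 (by linarith) hd2
    linarith [this]
  have hδle : δ γstar ≤ Real.pi / 2 + α γstar := by
    by_contra hcon
    push_neg at hcon
    have h1 : Real.cos (δ γstar) < Real.cos (Real.pi / 2 + α γstar) :=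
      Real.cos_lt_cos_of_nonneg_of_le_pi (by linarith) hδπ hcon
    rw [hcosδ, show Real.cos (Real.pi / 2 + α γstar) = -Real.sin (α γstar) by
      rw [Real.cos_add, Real.cos_pi_div_two, Real.sin_pi_div_two]; ring, hsinα] at h1
    have h2 : r - s * C < -A * D := (div_lt_iff₀ hdpos).mp h1
    have hAD : A * D = ((μ ^ 2 - 1) * (R - s) ^ 2 + D ^ 2) / (2 * μ * (R - s)) := by
      rw [hA]; field_simp
    have h3 : 0 ≤ (2 * μ * (R - s) * (r - s * C) + ((μ ^ 2 - 1) * (R - s) ^ 2 + D ^ 2))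
        / (2 * μ * (R - s)) := div_nonneg hkey (by positivity)
    rw [add_div, mul_div_cancel_left₀ _ (by positivity : (2 * μ * (R - s) : ℝ) ≠ 0)] at h3
    have h4 : -A * D = -(A * D) := by ring
    rw [h4, hAD] at h2
    linarith
  have hub : α γstar - δ γstar ≤ Real.pi / 2 := by linarith
  have hlb : -(Real.pi / 2) ≤ α γstar - δ γstar := by linarith
  calc α γstar - δ γstar
      = Real.arcsin (Real.sin (α γstar - δ γstar)) := (Real.arcsin_sin hlb hub).symm
    _ = _ := by rw [hsin_main]
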